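/- Let M be a real symmetric p×p matrix and let 0 ≤ r ≤ p. Then there exists a real symmetric p×p matrix X with rank X ≤ r such that ‖M − X‖_F ≤ ‖M − Y‖_F for every real p×p matrix Y with rank Y ≤ r. In other words, the best rank-at-most-r Frobenius-norm approximation of a symmetric matrix can be chosen symmetric, so the minimum over all matrices of rank at most r equals the minimum over symmetric matrices of rank at most r. -/

import Mathlib

open Matrix

/-- The Frobenius norm `‖A‖_F = sqrt(tr(Aᵀ A))` of a real square matrix. -/
noncomputable def frobNorm {p : ℕ} (A : Matrix (Fin p) (Fin p) ℝ) : ℝ :=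
  Real.sqrt ((Aᵀ * A).trace)


section EckartYoungAux
open Finset
variable {p : ℕ}

noncomputable def fsq (A : Matrix (Fin p) (Fin p) ℝ) : ℝ := ∑ i, ∑ j, A i j ^ 2

lemma fsq_nonneg (A : Matrix (Fin p) (Fin p) ℝ) : 0 ≤ fsq A :=
  Finset.sum_nonneg fun _ _ => Finset.sum_nonneg fun _ _ => sq_nonneg _

lemma trace_transpose_mul_self (A : Matrix (Fin p) (Fin p) ℝ) : (Aᵀ * A).trace = fsq A := by
  simp only [Matrix.trace, Matrix.diag, Matrix.mul_apply, fsq, transpose_apply, sq]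
  exact Finset.sum_comm

lemma frobNorm_eq (A : Matrix (Fin p) (Fin p) ℝ) : frobNorm A = Real.sqrt (fsq A) := by
  rw [frobNorm, trace_transpose_mul_self]

lemma fsq_conj (U A : Matrix (Fin p) (Fin p) ℝ) (h1 : U * Uᵀ = 1) (h2 : Uᵀ * U = 1) :
    fsq (Uᵀ * A * U) = fsq A := by
  rw [← trace_transpose_mul_self, ← trace_transpose_mul_self]
  have : (Uᵀ * A * U)ᵀ * (Uᵀ * A * U) = Uᵀ * (Aᵀ * A) * U := by
    simp only [transpose_mul, transpose_transpose, Matrix.mul_assoc]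
    rw [← Matrix.mul_assoc U Uᵀ (A * U), h1, Matrix.one_mul]
  rw [this, Matrix.trace_mul_cycle, ← Matrix.mul_assoc, h1, Matrix.one_mul]

lemma lp_bound (T : Finset (Fin p)) (c t : Fin p → ℝ) (m : ℝ)
    (hc : ∀ i, 0 ≤ c i) (ht0 : ∀ i, 0 ≤ t i) (ht1 : ∀ i, t i ≤ 1) (hm : 0 ≤ m)
    (hT1 : ∀ j ∈ T, c j ≤ m) (hT2 : ∀ i ∉ T, m ≤ c i)
    (hsum : (T.card : ℝ) ≤ ∑ i, t i) :
    ∑ i ∈ T, c i ≤ ∑ i, c i * t i := by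
  have hsplit : ∑ i, c i * t i = ∑ i ∈ T, c i * t i + ∑ i ∈ Tᶜ, c i * t i :=
    (Finset.sum_add_sum_compl T _).symm
  have htsplit : ∑ i, t i = ∑ i ∈ T, t i + ∑ i ∈ Tᶜ, t i :=
    (Finset.sum_add_sum_compl T _).symm
  have hA : ∑ i ∈ T, c i - ∑ i ∈ T, c i * t i ≤ m * ((T.card : ℝ) - ∑ i ∈ T, t i) := by
    rw [← Finset.sum_sub_distrib, mul_sub, Finset.mul_sum,
      mul_comm m (T.card : ℝ), ← nsmul_eq_mul, ← Finset.sum_const, ← Finset.sum_sub_distrib]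
    refine Finset.sum_le_sum fun i hi => ?_
    have := hT1 i hi
    have h1 := ht1 i
    nlinarith
  have hB : m * ∑ i ∈ Tᶜ, t i ≤ ∑ i ∈ Tᶜ, c i * t i := by
    rw [Finset.mul_sum]
    refine Finset.sum_le_sum fun i hi => ?_
    have := hT2 i (Finset.mem_compl.mp hi)
    have := ht0 i
    nlinarith
  have hC : (T.card : ℝ) - ∑ i ∈ T, t i ≤ ∑ i ∈ Tᶜ, t i := by linarith
  nlinarith [mul_le_mul_of_nonneg_left hC hm]

lemma exists_proj (Z : Matrix (Fin p) (Fin p) ℝ) :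
    ∃ P : Matrix (Fin p) (Fin p) ℝ, Pᵀ = P ∧ P * P = P ∧ Z * P = 0 ∧
      ((p : ℝ) - Z.rank) ≤ P.trace := by
  classical
  set e : EuclideanSpace ℝ (Fin p) ≃ₗ[ℝ] (Fin p → ℝ) := WithLp.linearEquiv 2 ℝ (Fin p → ℝ) with he
  set K : Submodule ℝ (EuclideanSpace ℝ (Fin p)) :=
    (LinearMap.ker Z.mulVecLin).map (e.symm : (Fin p → ℝ) →ₗ[ℝ] EuclideanSpace ℝ (Fin p)) with hK
  set m := Module.finrank ℝ K with hm
  have hfin : m = Module.finrank ℝ (LinearMap.ker Z.mulVecLin) := by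
    exact LinearEquiv.finrank_map_eq e.symm _
  have hrn : Z.rank + Module.finrank ℝ (LinearMap.ker Z.mulVecLin) = p := by
    have := LinearMap.finrank_range_add_finrank_ker Z.mulVecLin
    simpa [Matrix.rank, Module.finrank_pi] using this
  let b : OrthonormalBasis (Fin m) ℝ K := stdOrthonormalBasis ℝ K
  let w : Fin m → (Fin p → ℝ) := fun j => e ((b j : EuclideanSpace ℝ (Fin p)))
  have hortho : ∀ j j', ∑ i, w j i * w j' i = if j = j' then (1:ℝ) else 0 := by
    intro j j'
    have := orthonormal_iff_ite.mp b.orthonormal j j'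
    rw [Submodule.coe_inner] at this
    rw [Finset.sum_congr rfl (fun i _ => mul_comm (w j i) (w j' i))]
    simpa [PiLp.inner_apply, RCLike.inner_apply, w, he] using this
  have hker : ∀ j, Z.mulVec (w j) = 0 := by
    intro j
    obtain ⟨x, hx, hx2⟩ := Submodule.mem_map.mp ((b j).2)
    have hwx : w j = x := by
      show e ((b j : EuclideanSpace ℝ (Fin p))) = x
      rw [← hx2]
      exact e.apply_symm_apply x
    rw [hwx]
    exact hx
  refine ⟨Matrix.of (fun i i' => ∑ j, w j i * w j i'), ?_, ?_, ?_, ?_⟩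
  · ext i i'
    simp [Matrix.transpose_apply, mul_comm]
  · ext a c
    simp only [Matrix.mul_apply, Matrix.of_apply]
    calc ∑ i, (∑ j, w j a * w j i) * (∑ j', w j' i * w j' c)
        = ∑ i, ∑ j, ∑ j', w j a * w j' c * (w j i * w j' i) := by
          refine Finset.sum_congr rfl fun i _ => ?_
          rw [Finset.sum_mul_sum]
          exact Finset.sum_congr rfl fun j _ => Finset.sum_congr rfl fun j' _ => by ring
      _ = ∑ j, ∑ j', ∑ i, w j a * w j' c * (w j i * w j' i) := by
          rw [Finset.sum_comm]
          exact Finset.sum_congr rfl fun j _ => Finset.sum_comm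
      _ = ∑ j, ∑ j', w j a * w j' c * ∑ i, w j i * w j' i := by
          simp_rw [← Finset.mul_sum]
      _ = ∑ j, w j a * w j c := by
          simp_rw [hortho]
          simp
  · ext a c
    simp only [Matrix.mul_apply, Matrix.of_apply, Matrix.zero_apply]
    calc ∑ i, Z a i * ∑ j, w j i * w j c
        = ∑ j, (∑ i, Z a i * w j i) * w j c := by
          simp_rw [Finset.mul_sum]
          rw [Finset.sum_comm]
          refine Finset.sum_congr rfl fun j _ => ?_
          rw [Finset.sum_mul]
          exact Finset.sum_congr rfl fun i _ => by ring
      _ = 0 := by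
          refine Finset.sum_eq_zero fun j _ => ?_
          have := congrFun (hker j) a
          simp only [Matrix.mulVec, dotProduct] at this
          simp [this]
  · have htr : Matrix.trace (Matrix.of (fun i i' => ∑ j, w j i * w j i')) = (m : ℝ) := by
      simp only [Matrix.trace, Matrix.diag, Matrix.of_apply]
      rw [Finset.sum_comm]
      rw [Finset.sum_congr rfl (fun j _ => by simpa using hortho j j)]
      simp
    rw [htr]
    have : (m : ℝ) = (p : ℝ) - Z.rank := by
      rw [hfin]
      have : (Z.rank : ℝ) + (Module.finrank ℝ (LinearMap.ker Z.mulVecLin) : ℝ) = p := by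
        exact_mod_cast congrArg (Nat.cast : ℕ → ℝ) hrn
      linarith
    linarith [this.ge]

lemma fsq_mul_proj_le (A P : Matrix (Fin p) (Fin p) ℝ) (hPs : Pᵀ = P) (hP2 : P * P = P) :
    fsq (A * P) ≤ fsq A := by
  have h1 : fsq (A * P) = ((Aᵀ * A) * P).trace := by
    rw [← trace_transpose_mul_self]
    have : (A * P)ᵀ * (A * P) = Pᵀ * (Aᵀ * A) * P := by
      simp only [transpose_mul, Matrix.mul_assoc]
    rw [this, hPs, Matrix.trace_mul_cycle, hP2, Matrix.trace_mul_comm]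
  have hQs : (1 - P)ᵀ = 1 - P := by simp [transpose_sub, hPs]
  have hQ2 : (1 - P) * (1 - P) = 1 - P := by
    simp only [Matrix.sub_mul, Matrix.mul_sub, Matrix.one_mul, Matrix.mul_one, hP2]
    abel
  have h2 : fsq (A * (1 - P)) = ((Aᵀ * A) * (1 - P)).trace := by
    rw [← trace_transpose_mul_self]
    have : (A * (1 - P))ᵀ * (A * (1 - P)) = (1 - P)ᵀ * (Aᵀ * A) * (1 - P) := by
      simp only [transpose_mul, Matrix.mul_assoc]
    rw [this, hQs, Matrix.trace_mul_cycle, hQ2, Matrix.trace_mul_comm]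
  have h3 : ((Aᵀ * A) * P).trace + ((Aᵀ * A) * (1 - P)).trace = fsq A := by
    rw [← Matrix.trace_add, ← Matrix.mul_add]
    simp [trace_transpose_mul_self]
  have := fsq_nonneg (A * (1 - P))
  linarith [h1, h2, h3]

lemma fsq_diag_mul_proj (d : Fin p → ℝ) (P : Matrix (Fin p) (Fin p) ℝ)
    (hPs : Pᵀ = P) (hP2 : P * P = P) :
    fsq (diagonal d * P) = ∑ i, d i ^ 2 * P i i := by
  rw [← trace_transpose_mul_self]
  have : (diagonal d * P)ᵀ * (diagonal d * P) = Pᵀ * (diagonal d * diagonal d) * P := by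
    simp only [transpose_mul, diagonal_transpose, Matrix.mul_assoc]
  rw [this, hPs, Matrix.trace_mul_cycle, hP2, Matrix.trace_mul_comm, diagonal_mul_diagonal]
  simp only [Matrix.trace, Matrix.diag, Matrix.diagonal_mul, Matrix.of_apply, Pi.mul_apply, sq]

lemma fsq_diagonal (d : Fin p → ℝ) : fsq (diagonal d) = ∑ i, d i ^ 2 := by
  unfold fsq
  refine Finset.sum_congr rfl fun i _ => ?_
  rw [Finset.sum_eq_single i] <;> simp_all [diagonal_apply]
  intro b hb; simp [Ne.symm hb]

lemma diag_case (r : ℕ) (hr : r ≤ p) (d : Fin p → ℝ) :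
    ∃ X : Matrix (Fin p) (Fin p) ℝ, X.IsSymm ∧ X.rank ≤ r ∧
      ∀ Z : Matrix (Fin p) (Fin p) ℝ, Z.rank ≤ r →
        fsq (diagonal d - X) ≤ fsq (diagonal d - Z) := by
  classical
  set k := p - r with hk
  have hkp : k ≤ p := Nat.sub_le _ _
  set c : Fin p → ℝ := fun i => d i ^ 2 with hc
  set σ : Equiv.Perm (Fin p) := Tuple.sort c with hσ
  have hmono : Monotone (c ∘ σ) := Tuple.monotone_sort c
  set T : Finset (Fin p) := Finset.image (fun j : Fin k => σ (Fin.castLE hkp j)) univ with hT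
  have hinj : Function.Injective (fun j : Fin k => σ (Fin.castLE hkp j)) :=
    fun a b h => Fin.castLE_injective hkp (σ.injective h)
  have hTcard : T.card = k := by
    rw [hT, Finset.card_image_of_injective _ hinj, Finset.card_univ, Fintype.card_fin]
  -- threshold
  obtain ⟨mth, hm0, hth1, hth2⟩ :
      ∃ m : ℝ, 0 ≤ m ∧ (∀ j ∈ T, c j ≤ m) ∧ (∀ i ∉ T, m ≤ c i) := by
    rcases Nat.eq_zero_or_pos k with hk0 | hk0
    · refine ⟨0, le_refl 0, ?_, ?_⟩
      · intro j hj
        rw [hT] at hj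
        simp [hk0] at hj
        exact absurd hj (by rintro ⟨⟨j, hj⟩, -⟩; omega)
      · intro i _
        exact sq_nonneg _
    · refine ⟨c (σ (Fin.castLE hkp ⟨k - 1, by omega⟩)), sq_nonneg _, ?_, ?_⟩
      · intro j hj
        rw [hT, Finset.mem_image] at hj
        obtain ⟨a, -, ha⟩ := hj
        rw [← ha]
        exact hmono (by simp [Fin.le_def]; omega)
      · intro i hi
        have : i = σ (σ.symm i) := (σ.apply_symm_apply i).symm
        have hge : k ≤ (σ.symm i : ℕ) := by
          by_contra hlt
          push_neg at hlt
          apply hi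
          rw [hT, Finset.mem_image]
          refine ⟨⟨σ.symm i, hlt⟩, Finset.mem_univ _, ?_⟩
          have hcast : Fin.castLE hkp ⟨(σ.symm i : ℕ), hlt⟩ = σ.symm i := by
            ext; rfl
          rw [hcast]
          exact σ.apply_symm_apply i
        conv_rhs => rw [this]
        exact hmono (by simp [Fin.le_def]; omega)
  set X : Matrix (Fin p) (Fin p) ℝ := diagonal (fun i => if i ∈ T then 0 else d i) with hX
  refine ⟨X, Matrix.isSymm_diagonal _, ?_, ?_⟩
  · rw [hX, Matrix.rank_diagonal]
    have : Fintype.card {i // (if i ∈ T then (0:ℝ) else d i) ≠ 0}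
        = (univ.filter (fun i => (if i ∈ T then (0:ℝ) else d i) ≠ 0)).card := by
      rw [Fintype.card_subtype]
    rw [this]
    have hsub : (univ.filter (fun i => (if i ∈ T then (0:ℝ) else d i) ≠ 0)) ⊆ Tᶜ := by
      intro i hi
      rw [Finset.mem_filter] at hi
      rw [Finset.mem_compl]
      intro hiT
      exact hi.2 (by simp [hiT])
    calc _ ≤ Tᶜ.card := Finset.card_le_card hsub
      _ = p - T.card := by rw [Finset.card_compl]; simp
      _ ≤ r := by omega
  · intro Z hZ
    have hDX : fsq (diagonal d - X) = ∑ i ∈ T, c i := by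
      have : diagonal d - X = diagonal (fun i => if i ∈ T then d i else 0) := by
        ext i j
        by_cases h : i = j
        · subst h
          by_cases h2 : i ∈ T <;> simp [hX, diagonal_apply, h2, Matrix.sub_apply]
        · simp [hX, diagonal_apply, h, Matrix.sub_apply]
      rw [this, fsq_diagonal]
      rw [← Finset.sum_filter_add_sum_filter_not univ (· ∈ T)]
      have h1 : ∀ i ∈ univ.filter (· ∈ T), (if i ∈ T then d i else 0) ^ 2 = c i := by
        intro i hi; rw [Finset.mem_filter] at hi; simp [hi.2, hc]
      have h2 : ∀ i ∈ univ.filter (· ∉ T), (if i ∈ T then d i else 0) ^ 2 = 0 := by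
        intro i hi; rw [Finset.mem_filter] at hi; simp [hi.2]
      rw [Finset.sum_congr rfl h1, Finset.sum_congr rfl h2, Finset.sum_const_zero, add_zero]
      exact Finset.sum_congr (by rw [Finset.filter_mem_eq_inter, Finset.univ_inter]) fun _ _ => rfl
    rw [hDX]
    obtain ⟨P, hPs, hP2, hZP, htr⟩ := exists_proj Z
    have hdiag : ∀ i, P i i = ∑ j, P i j ^ 2 := by
      intro i
      conv_lhs => rw [← hP2]
      rw [Matrix.mul_apply]
      refine Finset.sum_congr rfl fun j _ => ?_
      rw [show P j i = P i j from (congrFun (congrFun hPs i) j : Pᵀ i j = P i j), sq]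
    have ht0 : ∀ i, 0 ≤ P i i := fun i => by
      rw [hdiag i]; exact Finset.sum_nonneg fun _ _ => sq_nonneg _
    have ht1 : ∀ i, P i i ≤ 1 := by
      intro i
      have h2 : P i i ^ 2 ≤ P i i := by
        conv_rhs => rw [hdiag i]
        exact Finset.single_le_sum (f := fun j => P i j ^ 2)
          (fun j _ => sq_nonneg _) (Finset.mem_univ i)
      nlinarith [ht0 i]
    -- main chain
    have hchain : ∑ i ∈ T, c i ≤ fsq (diagonal d - Z) := by
      have hle1 : fsq ((diagonal d - Z) * P) ≤ fsq (diagonal d - Z) :=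
        fsq_mul_proj_le _ P hPs hP2
      have heq : (diagonal d - Z) * P = diagonal d * P := by
        rw [Matrix.sub_mul, hZP, sub_zero]
      have heq2 : fsq ((diagonal d - Z) * P) = ∑ i, c i * P i i := by
        rw [heq, fsq_diag_mul_proj d P hPs hP2]
      have hlp : ∑ i ∈ T, c i ≤ ∑ i, c i * P i i := by
        refine lp_bound T c (fun i => P i i) mth (fun i => sq_nonneg _) ht0 ht1 hm0 hth1 hth2 ?_
        have hsumt : ∑ i, P i i = P.trace := rfl
        rw [hsumt, hTcard]
        have : ((p : ℝ) - r) ≤ (p : ℝ) - Z.rank := by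
          have : (Z.rank : ℝ) ≤ r := by exact_mod_cast hZ
          linarith
        have hkcast : ((k : ℕ) : ℝ) = (p : ℝ) - r := by
          rw [hk]; push_cast [Nat.cast_sub hr]; ring
        linarith
      linarith [heq2 ▸ hle1]
    exact hchain

end EckartYoungAux

/-- A best Frobenius-norm approximation of rank at most `r` to a
symmetric matrix `M` can be chosen symmetric: there is a symmetric `X` with
`rank X ≤ r` such that `‖M − X‖_F ≤ ‖M − Y‖_F` for every matrix `Y` of rank at most
`r`. -/
theorem symmetric_best_low_rank_approx (p r : ℕ) (hr : r ≤ p)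
    (M : Matrix (Fin p) (Fin p) ℝ) (hM : M.IsSymm) :
    ∃ X : Matrix (Fin p) (Fin p) ℝ, X.IsSymm ∧ X.rank ≤ r ∧
      ∀ Y : Matrix (Fin p) (Fin p) ℝ, Y.rank ≤ r →
        frobNorm (M - X) ≤ frobNorm (M - Y) := by
  classical
  have hH : M.IsHermitian := by
    rw [Matrix.IsHermitian, conjTranspose_eq_transpose_of_trivial]
    exact hM
  set U : Matrix (Fin p) (Fin p) ℝ := (hH.eigenvectorUnitary : Matrix (Fin p) (Fin p) ℝ) with hU
  have hU1 : U * Uᵀ = 1 := by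
    have := (Matrix.mem_unitaryGroup_iff).mp hH.eigenvectorUnitary.2
    simpa [star_eq_conjTranspose, conjTranspose_eq_transpose_of_trivial] using this
  have hU2 : Uᵀ * U = 1 := by
    have := (Matrix.mem_unitaryGroup_iff').mp hH.eigenvectorUnitary.2
    simpa [star_eq_conjTranspose, conjTranspose_eq_transpose_of_trivial] using this
  have hspec : M = U * diagonal hH.eigenvalues * Uᵀ := by
    have := hH.spectral_theorem
    simpa [star_eq_conjTranspose, conjTranspose_eq_transpose_of_trivial,
      Function.comp, RCLike.ofReal_real_eq_id] using this
  set D := diagonal hH.eigenvalues with hD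
  obtain ⟨X₀, hX₀s, hX₀r, hbest⟩ := diag_case r hr hH.eigenvalues
  have hdetU : IsUnit U.det :=
    isUnit_of_mul_isUnit_left (by rw [← Matrix.det_mul, hU1, Matrix.det_one]; exact isUnit_one)
  have hdetUt : IsUnit Uᵀ.det := by rwa [Matrix.det_transpose]
  refine ⟨U * X₀ * Uᵀ, ?_, ?_, ?_⟩
  · show (U * X₀ * Uᵀ)ᵀ = U * X₀ * Uᵀ
    rw [Matrix.transpose_mul, Matrix.transpose_mul, Matrix.transpose_transpose,
      hX₀s.eq, Matrix.mul_assoc]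
  · rw [Matrix.rank_mul_eq_left_of_isUnit_det Uᵀ (U * X₀) hdetUt,
      Matrix.rank_mul_eq_right_of_isUnit_det U X₀ hdetU]
    exact hX₀r
  · intro Y hY
    set Z := Uᵀ * Y * U with hZ
    have hZr : Z.rank ≤ r := by
      rw [hZ, Matrix.rank_mul_eq_left_of_isUnit_det U (Uᵀ * Y) hdetU,
        Matrix.rank_mul_eq_right_of_isUnit_det Uᵀ Y hdetUt]
      exact hY
    have hMX : M - U * X₀ * Uᵀ = U * (D - X₀) * Uᵀ := by
      rw [hspec, Matrix.mul_sub, Matrix.sub_mul]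
    have hMY : D - Z = Uᵀ * (M - Y) * U := by
      rw [hZ, hspec, Matrix.mul_sub, Matrix.sub_mul]
      congr 1
      symm
      calc Uᵀ * (U * D * Uᵀ) * U = (Uᵀ * U) * (D * (Uᵀ * U)) := by
            simp only [Matrix.mul_assoc]
        _ = D := by rw [hU2, Matrix.one_mul, Matrix.mul_one]
    have hfsq1 : fsq (M - U * X₀ * Uᵀ) = fsq (D - X₀) := by
      rw [hMX]
      have := fsq_conj Uᵀ (D - X₀) (by rw [transpose_transpose]; exact hU2)
        (by rw [transpose_transpose]; exact hU1)
      rwa [transpose_transpose] at this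
    have hfsq2 : fsq (D - Z) = fsq (M - Y) := by
      rw [hMY]
      exact fsq_conj U (M - Y) hU1 hU2
    rw [frobNorm, frobNorm, trace_transpose_mul_self, trace_transpose_mul_self, hfsq1]
    apply Real.sqrt_le_sqrt
    calc fsq (D - X₀) ≤ fsq (D - Z) := hbest Z hZr
      _ = fsq (M - Y) := hfsq2
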